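/- In a finite-horizon MDP, let π and π* be stochastic policies, and assume ρ₀(s) > 0, P(s'|s,a) > 0, π(a|s) > 0 and π*(a|s) > 0 for all s, s' ∈ S, a ∈ A. Then for every function f : ℝ → ℝ convex on [0,∞), the f-divergence between trajectory distributions is lower bounded by the f-divergence between average state distributions: ∑_τ ρ_π(τ)·f(ρ_{π*}(τ)/ρ_π(τ)) ≥ ∑_{s∈S} ρ_π(s)·f(ρ_{π*}(s)/ρ_π(s)). -/
import Mathlib


noncomputable section

/-- Time-`t` state distribution of a policy `π` in a finite MDP:
`ρ_π^0 = ρ₀` and `ρ_π^{t+1}(s) = ∑_{s',a} ρ_π^t(s') · π(a|s') · P(s|s',a)`. -/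
def stateDist {S A : Type*} [Fintype S] [Fintype A]
    (ρ₀ : S → ℝ) (P : S → A → S → ℝ) (π : S → A → ℝ) : ℕ → S → ℝ
  | 0 => ρ₀
  | t + 1 => fun s => ∑ s' : S, ∑ a : A, stateDist ρ₀ P π t s' * π s' a * P s' a s

/-- Average state distribution `ρ_π(s) = (1/T) ∑_{t=1}^T ρ_π^{t-1}(s)`. -/
def avgStateDist {S A : Type*} [Fintype S] [Fintype A]
    (ρ₀ : S → ℝ) (P : S → A → S → ℝ) (π : S → A → ℝ) (T : ℕ) (s : S) : ℝ :=
  (1 / (T : ℝ)) * ∑ t ∈ Finset.range T, stateDist ρ₀ P π t s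

/-- The state `s_{t-1}` preceding the `t`-th action in the trajectory
`τ = (s₀, a₁, s₁, …, a_T, s_T)`, encoded as `τ = (s₀, fun t => (a_{t+1}, s_{t+1}))`. -/
def prevState {S A : Type*} {T : ℕ} (τ : S × (Fin T → A × S)) (t : Fin T) : S :=
  if _h : (t : ℕ) = 0 then τ.1
  else (τ.2 ⟨(t : ℕ) - 1, lt_of_le_of_lt (Nat.pred_le _) t.isLt⟩).2

/-- Probability of a trajectory `τ = (s₀, a₁, s₁, …, a_T, s_T)` induced by policy `π`:
`ρ_π(τ) = ρ₀(s₀) ∏_{t=1}^T π(a_t|s_{t-1}) P(s_t|s_{t-1},a_t)`. -/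
def trajProb {S A : Type*} {T : ℕ}
    (ρ₀ : S → ℝ) (P : S → A → S → ℝ) (π : S → A → ℝ) (τ : S × (Fin T → A × S)) : ℝ :=
  ρ₀ τ.1 * ∏ t : Fin T,
    (π (prevState τ t) (τ.2 t).1 * P (prevState τ t) (τ.2 t).1 (τ.2 t).2)


def stAt {S A : Type*} {T : ℕ} (τ : S × (Fin T → A × S)) (t : ℕ) : S :=
  if h : 0 < t ∧ t - 1 < T then (τ.2 ⟨t - 1, h.2⟩).2 else τ.1

lemma prevState_eq_stAt {S A : Type*} {T : ℕ} (τ : S × (Fin T → A × S)) (t : Fin T) :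
    prevState τ t = stAt τ (t : ℕ) := by
  rcases Nat.eq_zero_or_pos (t : ℕ) with h | h
  · simp [prevState, stAt, h]
  · have h2 : (t : ℕ) - 1 < T := lt_of_le_of_lt (Nat.pred_le _) t.isLt
    simp [prevState, stAt, h, h2, Nat.pos_iff_ne_zero.mp h]

lemma stAt_snoc {S A : Type*} {T : ℕ} (s₀ : S) (g : Fin T → A × S) (x : A × S)
    {t : ℕ} (ht : t ≤ T) :
    stAt (T := T + 1) (s₀, Fin.snoc g x) t = stAt (s₀, g) t := by
  rcases Nat.eq_zero_or_pos t with h | h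
  · simp [stAt, h]
  · have h2 : t - 1 < T := by omega
    have h3 : t - 1 < T + 1 := by omega
    simp only [stAt, h, h2, h3, and_true, true_and, dif_pos]
    have : (⟨t - 1, h3⟩ : Fin (T + 1)) = Fin.castSucc ⟨t - 1, h2⟩ := rfl
    rw [this, Fin.snoc_castSucc]

lemma stAt_snoc_last {S A : Type*} {T : ℕ} (s₀ : S) (g : Fin T → A × S) (x : A × S) :
    stAt (T := T + 1) (s₀, Fin.snoc g x) (T + 1) = x.2 := by
  have h2 : T + 1 - 1 < T + 1 := by omega
  simp only [stAt, Nat.succ_pos, h2, and_true, true_and, dif_pos]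
  have : (⟨T + 1 - 1, h2⟩ : Fin (T + 1)) = Fin.last T := rfl
  rw [this, Fin.snoc_last]

lemma trajProb_snoc {S A : Type*} (ρ₀ : S → ℝ) (P : S → A → S → ℝ) (π : S → A → ℝ)
    {T : ℕ} (s₀ : S) (g : Fin T → A × S) (x : A × S) :
    trajProb (T := T + 1) ρ₀ P π (s₀, Fin.snoc g x)
      = trajProb ρ₀ P π (s₀, g)
        * (π (stAt (s₀, g) T) x.1 * P (stAt (s₀, g) T) x.1 x.2) := by
  unfold trajProb
  rw [Fin.prod_univ_castSucc, ← mul_assoc]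
  congr 1
  · congr 1
    apply Finset.prod_congr rfl
    intro i _
    have hp : prevState (T := T + 1) (s₀, Fin.snoc g x) (Fin.castSucc i)
        = prevState (s₀, g) i := by
      rw [prevState_eq_stAt, prevState_eq_stAt]
      exact stAt_snoc s₀ g x (by omega : (i : ℕ) ≤ T)
    simp only [Fin.coe_castSucc, hp, Fin.snoc_castSucc]
  · have hp : prevState (T := T + 1) (s₀, Fin.snoc g x) (Fin.last T) = stAt (s₀, g) T := by
      rw [prevState_eq_stAt]
      rcases Nat.eq_zero_or_pos T with h | h
      · subst h; simp [stAt]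
      · have : (Fin.last T : ℕ) = T := rfl
        rw [this]
        have h2 : T - 1 < T := by omega
        have h3 : T - 1 < T + 1 := by omega
        simp only [stAt, h, h2, h3, and_true, true_and, dif_pos]
        have : (⟨T - 1, h3⟩ : Fin (T + 1)) = Fin.castSucc ⟨T - 1, h2⟩ := rfl
        rw [this, Fin.snoc_castSucc]
    simp only [hp]
    congr 1 <;> simp [Fin.snoc_last]

/-- snoc equivalence on trajectories -/
def trajSnocEquiv (S A : Type*) (T : ℕ) :
    ((S × (Fin T → A × S)) × (A × S)) ≃ (S × (Fin (T + 1) → A × S)) where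
  toFun p := (p.1.1, Fin.snoc p.1.2 p.2)
  invFun τ := ((τ.1, Fin.init τ.2), τ.2 (Fin.last T))
  left_inv p := by simp [Fin.init_snoc, Fin.snoc_last]
  right_inv τ := by simp [Fin.snoc_init_self]

lemma marg {S A : Type*} [Fintype S] [Fintype A]
    (ρ₀ : S → ℝ) (P : S → A → S → ℝ) (π : S → A → ℝ)
    (hPsum : ∀ s a, ∑ s', P s a s' = 1) (hπsum : ∀ s, ∑ a, π s a = 1) :
    ∀ (T t : ℕ), t ≤ T → ∀ h : S → ℝ,
    ∑ τ : S × (Fin T → A × S), trajProb ρ₀ P π τ * h (stAt τ t)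
      = ∑ s, stateDist ρ₀ P π t s * h s := by
  intro T
  induction T with
  | zero =>
    intro t ht h
    interval_cases t
    rw [Fintype.sum_prod_type]
    simp [trajProb, stAt, stateDist]
  | succ T IH =>
    intro t ht h
    have hstep : ∀ s : S, ∑ x : A × S, π s x.1 * P s x.1 x.2 = 1 := by
      intro s
      rw [Fintype.sum_prod_type]
      simp [← Finset.mul_sum, hPsum, hπsum]
    rw [← Fintype.sum_equiv (trajSnocEquiv S A T)
      (fun p => trajProb ρ₀ P π ((trajSnocEquiv S A T) p)
        * h (stAt ((trajSnocEquiv S A T) p) t))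
      (fun τ => trajProb ρ₀ P π τ * h (stAt τ t)) (fun p => rfl)]
    rcases Nat.lt_or_ge t (T + 1) with htT | htT
    · -- t ≤ T
      have htT' : t ≤ T := by omega
      calc ∑ p : (S × (Fin T → A × S)) × (A × S),
            trajProb ρ₀ P π ((trajSnocEquiv S A T) p)
              * h (stAt ((trajSnocEquiv S A T) p) t)
          = ∑ q : S × (Fin T → A × S), ∑ x : A × S,
              (trajProb ρ₀ P π q * h (stAt q t))
                * (π (stAt q T) x.1 * P (stAt q T) x.1 x.2) := by
            rw [Fintype.sum_prod_type]
            refine Finset.sum_congr rfl fun q _ => Finset.sum_congr rfl fun x _ => ?_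
            show trajProb ρ₀ P π (q.1, Fin.snoc q.2 x) * h (stAt (q.1, Fin.snoc q.2 x) t) = _
            rw [trajProb_snoc, stAt_snoc q.1 q.2 x htT']
            ring
        _ = ∑ q : S × (Fin T → A × S), trajProb ρ₀ P π q * h (stAt q t) := by
            refine Finset.sum_congr rfl fun q _ => ?_
            rw [← Finset.mul_sum, hstep, mul_one]
        _ = ∑ s, stateDist ρ₀ P π t s * h s := IH t htT' h
    · -- t = T + 1
      have htT' : t = T + 1 := by omega
      subst htT'
      calc ∑ p : (S × (Fin T → A × S)) × (A × S),
            trajProb ρ₀ P π ((trajSnocEquiv S A T) p)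
              * h (stAt ((trajSnocEquiv S A T) p) (T + 1))
          = ∑ q : S × (Fin T → A × S),
              trajProb ρ₀ P π q
                * (∑ x : A × S, π (stAt q T) x.1 * P (stAt q T) x.1 x.2 * h x.2) := by
            rw [Fintype.sum_prod_type]
            refine Finset.sum_congr rfl fun q _ => ?_
            rw [Finset.mul_sum]
            refine Finset.sum_congr rfl fun x _ => ?_
            show trajProb ρ₀ P π (q.1, Fin.snoc q.2 x) * h (stAt (q.1, Fin.snoc q.2 x) (T+1)) = _
            rw [trajProb_snoc, stAt_snoc_last]
            ring
        _ = ∑ s, stateDist ρ₀ P π T s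
              * (∑ x : A × S, π s x.1 * P s x.1 x.2 * h x.2) :=
            IH T le_rfl (fun s => ∑ x : A × S, π s x.1 * P s x.1 x.2 * h x.2)
        _ = ∑ s', stateDist ρ₀ P π (T + 1) s' * h s' := by
            show _ = ∑ s' : S, (∑ s : S, ∑ a : A, stateDist ρ₀ P π T s * π s a * P s a s') * h s'
            have swap3 : ∀ F : S → A → S → ℝ,
                ∑ s : S, ∑ a : A, ∑ s' : S, F s a s'
                  = ∑ s' : S, ∑ s : S, ∑ a : A, F s a s' := by
              intro F
              rw [show (∑ s : S, ∑ a : A, ∑ s' : S, F s a s')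
                  = ∑ s : S, ∑ s' : S, ∑ a : A, F s a s' from
                Finset.sum_congr rfl fun s _ => Finset.sum_comm]
              exact Finset.sum_comm
            calc ∑ s, stateDist ρ₀ P π T s * ∑ x : A × S, π s x.1 * P s x.1 x.2 * h x.2
                = ∑ s : S, ∑ a : A, ∑ s' : S,
                    stateDist ρ₀ P π T s * (π s a * P s a s' * h s') := by
                  simp only [Fintype.sum_prod_type, Finset.mul_sum]
              _ = ∑ s' : S, ∑ s : S, ∑ a : A,
                    stateDist ρ₀ P π T s * (π s a * P s a s' * h s') := swap3 _
              _ = ∑ s' : S, (∑ s : S, ∑ a : A, stateDist ρ₀ P π T s * π s a * P s a s') * h s' := by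
                  simp only [Finset.sum_mul]
                  exact Finset.sum_congr rfl fun s' _ => Finset.sum_congr rfl fun s _ =>
                    Finset.sum_congr rfl fun a _ => by ring


open Finset in

lemma fiber_jensen {X Y : Type*} [Fintype X] [Fintype Y] [DecidableEq Y] (g : X → Y)
    (p q : X → ℝ) (hq : ∀ x, 0 < q x) (hp : ∀ x, 0 ≤ p x)
    (f : ℝ → ℝ) (hf : ConvexOn ℝ (Set.Ici (0 : ℝ)) f) :
    ∑ y : Y, (∑ x ∈ univ.filter (g · = y), q x)
        * f ((∑ x ∈ univ.filter (g · = y), p x) / (∑ x ∈ univ.filter (g · = y), q x))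
      ≤ ∑ x : X, q x * f (p x / q x) := by
  rw [← Finset.sum_fiberwise univ g (fun x => q x * f (p x / q x))]
  refine Finset.sum_le_sum fun y _ => ?_
  set t := univ.filter (g · = y) with ht
  rcases t.eq_empty_or_nonempty with he | hne
  · simp [he]
  · have hQ : 0 < ∑ x ∈ t, q x := Finset.sum_pos (fun x _ => hq x) hne
    set Q : ℝ := ∑ x ∈ t, q x with hQdef
    have jensen := hf.map_sum_le (t := t) (w := fun x => q x / Q)
      (p := fun x => p x / q x)
      (fun x _ => div_nonneg (hq x).le hQ.le)
      (by rw [← Finset.sum_div, div_self hQ.ne'])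
      (fun x _ => div_nonneg (hp x) (hq x).le)
    have hsum : ∑ x ∈ t, (q x / Q) • (p x / q x) = (∑ x ∈ t, p x) / Q := by
      rw [Finset.sum_div]
      exact Finset.sum_congr rfl fun x _ => by
        rw [smul_eq_mul, div_mul_div_comm, mul_comm Q (q x),
          mul_div_mul_left _ _ (hq x).ne']
    rw [hsum] at jensen
    calc Q * f ((∑ x ∈ t, p x) / Q) ≤ Q * ∑ x ∈ t, (q x / Q) • f (p x / q x) :=
          mul_le_mul_of_nonneg_left jensen hQ.le
      _ = ∑ x ∈ t, q x * f (p x / q x) := by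
          rw [Finset.mul_sum]
          exact Finset.sum_congr rfl fun x _ => by
            rw [smul_eq_mul, ← mul_assoc, mul_div_cancel₀ _ hQ.ne']

/-- **Corollary.** The f-divergence between trajectory distributions is lower bounded by
the f-divergence between average state distributions. -/
theorem traj_fdiv_ge_state_fdiv
    {S A : Type*} [Fintype S] [Nonempty S] [Fintype A] [Nonempty A]
    (ρ₀ : S → ℝ) (hρ₀pos : ∀ s, 0 < ρ₀ s) (hρ₀sum : ∑ s, ρ₀ s = 1)
    (P : S → A → S → ℝ) (hPpos : ∀ s a s', 0 < P s a s')
    (hPsum : ∀ s a, ∑ s', P s a s' = 1)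
    (T : ℕ) (hT : 1 ≤ T)
    (π πstar : S → A → ℝ)
    (hπpos : ∀ s a, 0 < π s a) (hπsum : ∀ s, ∑ a, π s a = 1)
    (hπstarpos : ∀ s a, 0 < πstar s a) (hπstarsum : ∀ s, ∑ a, πstar s a = 1)
    (f : ℝ → ℝ) (hf : ConvexOn ℝ (Set.Ici (0 : ℝ)) f) :
    ∑ τ : S × (Fin T → A × S),
        trajProb ρ₀ P π τ * f (trajProb ρ₀ P πstar τ / trajProb ρ₀ P π τ) ≥
      ∑ s : S, avgStateDist ρ₀ P π T s *
        f (avgStateDist ρ₀ P πstar T s / avgStateDist ρ₀ P π T s) := by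
  classical
  have hTpos : (0 : ℝ) < (T : ℝ) := by exact_mod_cast Nat.lt_of_lt_of_le Nat.zero_lt_one hT
  have hTne : (T : ℝ) ≠ 0 := hTpos.ne'
  have hpos : ∀ (π' : S → A → ℝ), (∀ s a, 0 < π' s a) →
      ∀ τ : S × (Fin T → A × S), 0 < trajProb ρ₀ P π' τ := by
    intro π' hπ' τ
    exact mul_pos (hρ₀pos _) (Finset.prod_pos fun i _ => mul_pos (hπ' _ _) (hPpos _ _ _))
  have hfib : ∀ (π' : S → A → ℝ), (∀ s, ∑ a, π' s a = 1) → ∀ s : S,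
      ∑ x ∈ Finset.univ.filter
          (fun x : Fin T × (S × (Fin T → A × S)) => prevState x.2 x.1 = s),
        trajProb ρ₀ P π' x.2 = (T : ℝ) * avgStateDist ρ₀ P π' T s := by
    intro π' hsum' s
    rw [Finset.sum_filter, Fintype.sum_prod_type]
    have h1 : ∀ t : Fin T,
        (∑ τ : S × (Fin T → A × S), if prevState τ t = s then trajProb ρ₀ P π' τ else 0)
          = stateDist ρ₀ P π' (t : ℕ) s := by
      intro t
      have hm := marg ρ₀ P π' hPsum hsum' T (t : ℕ) (le_of_lt t.isLt)
        (fun u => if u = s then (1 : ℝ) else 0)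
      calc (∑ τ : S × (Fin T → A × S), if prevState τ t = s then trajProb ρ₀ P π' τ else 0)
          = ∑ τ : S × (Fin T → A × S),
              trajProb ρ₀ P π' τ * (if stAt τ (t : ℕ) = s then (1 : ℝ) else 0) := by
            refine Finset.sum_congr rfl fun τ _ => ?_
            rw [prevState_eq_stAt, mul_ite, mul_one, mul_zero]
        _ = ∑ u, stateDist ρ₀ P π' (t : ℕ) u * (if u = s then (1 : ℝ) else 0) := hm
        _ = stateDist ρ₀ P π' (t : ℕ) s := by simp
    calc ∑ t : Fin T, ∑ τ : S × (Fin T → A × S),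
          (if prevState τ t = s then trajProb ρ₀ P π' τ else 0)
        = ∑ t : Fin T, stateDist ρ₀ P π' (t : ℕ) s := Finset.sum_congr rfl fun t _ => h1 t
      _ = ∑ t ∈ Finset.range T, stateDist ρ₀ P π' t s :=
          Fin.sum_univ_eq_sum_range (fun t => stateDist ρ₀ P π' t s) T
      _ = (T : ℝ) * avgStateDist ρ₀ P π' T s := by
          rw [avgStateDist, ← mul_assoc, mul_one_div, div_self hTne, one_mul]
  have key := fiber_jensen (fun x : Fin T × (S × (Fin T → A × S)) => prevState x.2 x.1)
    (fun x => trajProb ρ₀ P πstar x.2) (fun x => trajProb ρ₀ P π x.2)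
    (fun x => hpos π hπpos x.2) (fun x => (hpos πstar hπstarpos x.2).le) f hf
  have goal' : (T : ℝ) * ∑ s : S, avgStateDist ρ₀ P π T s *
        f (avgStateDist ρ₀ P πstar T s / avgStateDist ρ₀ P π T s)
      ≤ (T : ℝ) * ∑ τ : S × (Fin T → A × S),
        trajProb ρ₀ P π τ * f (trajProb ρ₀ P πstar τ / trajProb ρ₀ P π τ) := by
    calc (T : ℝ) * ∑ s : S, avgStateDist ρ₀ P π T s *
          f (avgStateDist ρ₀ P πstar T s / avgStateDist ρ₀ P π T s)
        = ∑ s : S, ((T : ℝ) * avgStateDist ρ₀ P π T s) *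
            f (((T : ℝ) * avgStateDist ρ₀ P πstar T s) / ((T : ℝ) * avgStateDist ρ₀ P π T s)) := by
          rw [Finset.mul_sum]
          refine Finset.sum_congr rfl fun s _ => ?_
          rw [mul_div_mul_left _ _ hTne, mul_assoc]
      _ = ∑ s : S,
            (∑ x ∈ Finset.univ.filter
                (fun x : Fin T × (S × (Fin T → A × S)) => prevState x.2 x.1 = s),
              trajProb ρ₀ P π x.2) *
            f ((∑ x ∈ Finset.univ.filter
                (fun x : Fin T × (S × (Fin T → A × S)) => prevState x.2 x.1 = s),
              trajProb ρ₀ P πstar x.2) /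
              (∑ x ∈ Finset.univ.filter
                (fun x : Fin T × (S × (Fin T → A × S)) => prevState x.2 x.1 = s),
              trajProb ρ₀ P π x.2)) := by
          refine Finset.sum_congr rfl fun s _ => ?_
          rw [hfib π hπsum s, hfib πstar hπstarsum s]
      _ ≤ ∑ x : Fin T × (S × (Fin T → A × S)),
            trajProb ρ₀ P π x.2 * f (trajProb ρ₀ P πstar x.2 / trajProb ρ₀ P π x.2) := key
      _ = (T : ℝ) * ∑ τ : S × (Fin T → A × S),
            trajProb ρ₀ P π τ * f (trajProb ρ₀ P πstar τ / trajProb ρ₀ P π τ) := by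
          rw [Fintype.sum_prod_type]
          simp only [Finset.sum_const, Finset.card_univ, Fintype.card_fin, nsmul_eq_mul]
  exact le_of_mul_le_mul_left goal' hTpos

end
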